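/- arXiv:2502.02625 — 4 statements merged into one kernel-verified Lean document; each statement's English description precedes it below -/
import Mathlib

section
/- Let V ≥ 1, γ > 0, σ₀ > 0, and define τ_w = (γ² + 2∑_{v=1}^{V} cos(vwπ/V))/(γ² + 2V) for integers w. Then τ_0 = 1, τ_w = (γ² − 2)/(γ² + 2V) for odd w with 1 ≤ w ≤ 2V−1, and τ_w = γ²/(γ² + 2V) for even w with 2 ≤ w ≤ 2V−2. Consequently the 2V × 2V Toeplitz kernel matrix K with entries K_{ij} = σ₀²τ_{|i−j|} satisfies K = (σ₀²/(γ²+2V))(2V·I + (γ²−1)𝟙𝟙ᵀ + ccᵀ), where 𝟙 is the all-ones vector and c = (1,−1,1,−1,…,1,−1)ᵀ. -/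
open Real Finset Matrix

lemma cos_sum_aux (V : ℕ) (hV : 1 ≤ V) (w : ℕ) (h1 : 1 ≤ w) (h2 : w ≤ 2 * V - 1) :
    ∑ v ∈ Finset.Icc 1 V, Real.cos ((v : ℝ) * (w : ℝ) * π / V) = ((-1 : ℝ) ^ w - 1) / 2 := by
  have hV1 : (1 : ℝ) ≤ V := by exact_mod_cast hV
  have hVpos : (0 : ℝ) < V := by linarith
  have hw1 : (1 : ℝ) ≤ w := by exact_mod_cast h1
  have hw2 : (w : ℝ) < 2 * V := by exact_mod_cast (by omega : w < 2 * V)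
  set θ : ℝ := w * π / V with hθ
  have hs : 0 < Real.sin (θ / 2) := by
    apply Real.sin_pos_of_pos_of_lt_pi
    · rw [hθ]; positivity
    · rw [hθ, div_div, div_lt_iff₀ (by positivity)]
      nlinarith [pi_pos]
  have key : ∀ i : ℕ, 2 * Real.sin (θ / 2) * Real.cos (((i : ℝ) + 1) * θ)
      = Real.sin (((i : ℝ) + 1) * θ + θ / 2) - Real.sin ((i : ℝ) * θ + θ / 2) := by
    intro i
    rw [Real.sin_sub_sin]
    have e1 : (((i : ℝ) + 1) * θ + θ / 2 - ((i : ℝ) * θ + θ / 2)) / 2 = θ / 2 := by ring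
    have e2 : (((i : ℝ) + 1) * θ + θ / 2 + ((i : ℝ) * θ + θ / 2)) / 2 = ((i : ℝ) + 1/2) * θ + θ/2 := by
      ring
    rw [e1, e2]
    ring_nf
  have tele : ∑ i ∈ Finset.range V,
      (Real.sin (((i : ℝ) + 1) * θ + θ / 2) - Real.sin ((i : ℝ) * θ + θ / 2))
      = Real.sin ((V : ℝ) * θ + θ / 2) - Real.sin (θ / 2) := by
    have h := Finset.sum_range_sub (f := fun i : ℕ => Real.sin ((i : ℝ) * θ + θ / 2)) V
    push_cast at h
    simpa using h
  have main : 2 * Real.sin (θ / 2) * ∑ v ∈ Finset.Icc 1 V, Real.cos ((v : ℝ) * (w : ℝ) * π / V)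
      = Real.sin ((V : ℝ) * θ + θ / 2) - Real.sin (θ / 2) := by
    rw [Finset.mul_sum, ← tele]
    have : Finset.Icc 1 V = Finset.Ico 1 (V + 1) := by rw [Finset.Ico_add_one_right_eq_Icc]
    rw [this, Finset.sum_Ico_eq_sum_range]
    simp only [Nat.add_sub_cancel]
    apply Finset.sum_congr rfl
    intro i _
    have : ((1 + i : ℕ) : ℝ) * (w : ℝ) * π / V = ((i : ℝ) + 1) * θ := by
      rw [hθ]; push_cast; field_simp; ring
    rw [this, key i]
  have hVθ : (V : ℝ) * θ = w * π := by rw [hθ]; field_simp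
  have hsin_top : Real.sin ((V : ℝ) * θ + θ / 2) = (-1) ^ w * Real.sin (θ / 2) := by
    rw [hVθ, Real.sin_add, Real.sin_nat_mul_pi]
    have : Real.cos ((w : ℝ) * π) = (-1) ^ w := by
      simpa using Real.cos_nat_mul_pi_sub 0 w
    rw [this]
    ring
  rw [hsin_top] at main
  have hs' : Real.sin (θ / 2) ≠ 0 := ne_of_gt hs
  field_simp at main ⊢
  have hsum : ∑ x ∈ Finset.Icc 1 V, Real.cos ((w : ℝ) * π * (x : ℝ) / V)
      = ∑ x ∈ Finset.Icc 1 V, Real.cos ((x : ℝ) * (w : ℝ) * π / V) :=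
    Finset.sum_congr rfl (fun x _ => by congr 1; ring)
  rw [hsum]
  nlinarith [main]

theorem vqe_kernel_toeplitz_structure (V : ℕ) (hV : 1 ≤ V) (γ σ₀ : ℝ)
    (hγ : 0 < γ) (hσ₀ : 0 < σ₀)
    (τ : ℤ → ℝ)
    (hτ : ∀ w : ℤ, τ w =
      (γ ^ 2 + 2 * ∑ v ∈ Finset.Icc 1 V, Real.cos ((v : ℝ) * (w : ℝ) * π / V))
        / (γ ^ 2 + 2 * V))
    (K : Matrix (Fin (2 * V)) (Fin (2 * V)) ℝ)
    (hK : ∀ i j : Fin (2 * V), K i j = σ₀ ^ 2 * τ (((i : ℤ) - (j : ℤ)).natAbs))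
    (c : Fin (2 * V) → ℝ) (hc : ∀ i, c i = (-1 : ℝ) ^ (i : ℕ)) :
    τ 0 = 1 ∧
    (∀ w : ℤ, Odd w → 1 ≤ w → w ≤ 2 * (V : ℤ) - 1 → τ w = (γ ^ 2 - 2) / (γ ^ 2 + 2 * V)) ∧
    (∀ w : ℤ, Even w → 2 ≤ w → w ≤ 2 * (V : ℤ) - 2 → τ w = γ ^ 2 / (γ ^ 2 + 2 * V)) ∧
    K = (σ₀ ^ 2 / (γ ^ 2 + 2 * V)) •
      ((2 * (V : ℝ)) • (1 : Matrix (Fin (2 * V)) (Fin (2 * V)) ℝ)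
        + (γ ^ 2 - 1) • Matrix.vecMulVec (fun _ => (1 : ℝ)) (fun _ => (1 : ℝ))
        + Matrix.vecMulVec c c) := by
  have hVpos : (0 : ℝ) < V := by exact_mod_cast Nat.lt_of_lt_of_le Nat.zero_lt_one hV
  have hden : γ ^ 2 + 2 * (V : ℝ) ≠ 0 := by positivity
  have hτ0 : τ 0 = 1 := by
    rw [hτ 0]
    have : ∀ v ∈ Finset.Icc 1 V, Real.cos ((v : ℝ) * ((0 : ℤ) : ℝ) * π / V) = 1 := by
      intro v _; norm_num
    rw [Finset.sum_congr rfl this, Finset.sum_const, Nat.card_Icc]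
    simp only [Nat.add_sub_cancel, nsmul_eq_mul, mul_one]
    exact div_self hden
  have hτgen : ∀ n : ℕ, 1 ≤ n → n ≤ 2 * V - 1 →
      τ (n : ℤ) = (γ ^ 2 - 1 + (-1 : ℝ) ^ n) / (γ ^ 2 + 2 * V) := by
    intro n h1 h2
    rw [hτ]
    have : ∀ v ∈ Finset.Icc 1 V, Real.cos ((v : ℝ) * (((n : ℤ)) : ℝ) * π / V)
        = Real.cos ((v : ℝ) * (n : ℝ) * π / V) := by intro v _; norm_num
    rw [Finset.sum_congr rfl this, cos_sum_aux V hV n h1 h2]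
    congr 1; ring
  refine ⟨hτ0, ?_, ?_, ?_⟩
  · intro w hodd hw1 hw2
    obtain ⟨n, rfl⟩ : ∃ n : ℕ, w = (n : ℤ) := ⟨w.toNat, (Int.toNat_of_nonneg (by omega)).symm⟩
    have hn1 : 1 ≤ n := by exact_mod_cast hw1
    have hn2 : n ≤ 2 * V - 1 := by omega
    have hno : Odd n := by
      rcases Nat.even_or_odd n with h | h
      · exact absurd (Int.even_coe_nat n |>.mpr h) (Int.not_even_iff_odd.mpr hodd)
      · exact h
    rw [hτgen n hn1 hn2, hno.neg_one_pow]
    ring_nf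
  · intro w heven hw1 hw2
    obtain ⟨n, rfl⟩ : ∃ n : ℕ, w = (n : ℤ) := ⟨w.toNat, (Int.toNat_of_nonneg (by omega)).symm⟩
    have hn1 : 1 ≤ n := by omega
    have hn2 : n ≤ 2 * V - 1 := by omega
    have hne : Even n := (Int.even_coe_nat n).mp heven
    rw [hτgen n hn1 hn2, hne.neg_one_pow]
    ring_nf
  · ext i j
    rw [hK]
    simp only [Matrix.smul_apply, Matrix.add_apply, Matrix.vecMulVec_apply, smul_eq_mul,
      Matrix.one_apply, hc, mul_one]
    by_cases hij : i = j
    · subst hij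
      simp only [sub_self, Int.natAbs_zero, Nat.cast_zero, if_pos rfl, if_true, hτ0, mul_one]
      have hcc : (-1 : ℝ) ^ (i : ℕ) * (-1 : ℝ) ^ (i : ℕ) = 1 := by
        rw [← pow_add]
        exact Even.neg_one_pow ⟨(i : ℕ), by ring⟩
      rw [hcc]
      field_simp
      ring
    · have hne : (i : ℕ) ≠ (j : ℕ) := Fin.val_ne_of_ne hij
      set n : ℕ := (((i : ℕ) : ℤ) - ((j : ℕ) : ℤ)).natAbs with hn
      have hiL := i.isLt
      have hjL := j.isLt
      have hn1 : 1 ≤ n := by omega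
      have hn2 : n ≤ 2 * V - 1 := by omega
      have hpar : n % 2 = ((i : ℕ) + (j : ℕ)) % 2 := by omega
      have hcc : (-1 : ℝ) ^ (i : ℕ) * (-1 : ℝ) ^ (j : ℕ) = (-1 : ℝ) ^ n := by
        rw [← pow_add]
        rcases Nat.even_or_odd n with h | h
        · rw [h.neg_one_pow, Even.neg_one_pow (Nat.even_iff.mpr (by
            rw [← hpar]; exact Nat.even_iff.mp h))]
        · rw [h.neg_one_pow, Odd.neg_one_pow (Nat.odd_iff.mpr (by
            rw [← hpar]; exact Nat.odd_iff.mp h))]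
      rw [if_neg hij, hcc, hτgen n hn1 hn2]
      field_simp
      ring
end

section
/- Let V ≥ 1 and α' be real. Define κ_w = 2∑_{v=1}^{V} v·sin(v((2w+1)π/(2V) − α')) for w = 0,…,2V−1. Then ∑_{w=0}^{2V−1} κ_w² = 4V·(V(V+1)(2V+1)/6 + V²·cos(2Vα')). -/
open Real Finset


-- sum of cos(k * θ_w) = 0 when 2V ∤ k
lemma sumCosZero (V : ℕ) (hV : 1 ≤ V) (α' : ℝ) (k : ℤ)
    (hk : ¬ ((2 * (V:ℤ)) ∣ k)) :
    ∑ w ∈ Finset.range (2*V), Real.cos ((k:ℝ) * ((2*(w:ℝ)+1)*π/(2*(V:ℝ)) - α')) = 0 := by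
  have hV0 : V ≠ 0 := by omega
  have hVR : (V:ℝ) ≠ 0 := Nat.cast_ne_zero.mpr hV0
  have hVC : (V:ℂ) ≠ 0 := Nat.cast_ne_zero.mpr hV0
  have hπ : (π:ℝ) ≠ 0 := Real.pi_ne_zero
  set z : ℂ := Complex.exp (Complex.I * k * π / V) with hz
  have hz1 : z ≠ 1 := by
    intro h
    rw [hz, Complex.exp_eq_one_iff] at h
    obtain ⟨n, hn⟩ := h
    apply hk ⟨n, ?_⟩
    have hn' : Complex.I * (((k:ℝ)*π/V : ℝ) : ℂ) = Complex.I * (((n:ℝ)*(2*π) : ℝ) : ℂ) := by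
      push_cast
      linear_combination hn
    have hreal : (k:ℝ)*π/V = (n:ℝ)*(2*π) := by
      have := mul_left_cancel₀ Complex.I_ne_zero hn'
      exact_mod_cast this
    have : (k:ℝ) = 2*(V:ℝ)*(n:ℝ) := by
      field_simp at hreal
      have h2 : (k:ℝ) * π = (2*(V:ℝ)*(n:ℝ)) * π := by linear_combination π * hreal
      exact mul_right_cancel₀ hπ h2
    exact_mod_cast this
  have hz2V : z ^ (2*V) = 1 := by
    rw [hz, ← Complex.exp_nat_mul]
    have : (2*V : ℕ) * (Complex.I * k * π / V) = (k:ℤ) * (2*π*Complex.I) := by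
      push_cast
      field_simp
    rw [this, Complex.exp_int_mul_two_pi_mul_I]
  have key : ∑ w ∈ Finset.range (2*V),
      Complex.exp ((((k:ℝ) * ((2*(w:ℝ)+1)*π/(2*(V:ℝ)) - α') : ℝ) : ℂ) * Complex.I) = 0 := by
    have hterm : ∀ w ∈ Finset.range (2*V),
        Complex.exp ((((k:ℝ) * ((2*(w:ℝ)+1)*π/(2*(V:ℝ)) - α') : ℝ) : ℂ) * Complex.I)
          = Complex.exp ((((k:ℝ) * (π/(2*(V:ℝ)) - α') : ℝ) : ℂ) * Complex.I) * z ^ w := by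
      intro w _
      rw [hz, ← Complex.exp_nat_mul, ← Complex.exp_add]
      congr 1
      push_cast
      field_simp
      ring
    rw [Finset.sum_congr rfl hterm, ← Finset.mul_sum, geom_sum_eq hz1, hz2V]
    simp
  calc ∑ w ∈ Finset.range (2*V), Real.cos ((k:ℝ) * ((2*(w:ℝ)+1)*π/(2*(V:ℝ)) - α'))
      = (∑ w ∈ Finset.range (2*V),
          Complex.exp ((((k:ℝ) * ((2*(w:ℝ)+1)*π/(2*(V:ℝ)) - α') : ℝ) : ℂ) * Complex.I)).re := by
        rw [Complex.re_sum]
        exact Finset.sum_congr rfl fun w _ => (Complex.exp_ofReal_mul_I_re _).symm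
    _ = 0 := by rw [key]; simp

-- sum of cos(2V * θ_w)
lemma sumCosTop (V : ℕ) (hV : 1 ≤ V) (α' : ℝ) :
    ∑ w ∈ Finset.range (2*V), Real.cos ((2*(V:ℝ)) * ((2*(w:ℝ)+1)*π/(2*(V:ℝ)) - α'))
      = -(2*(V:ℝ)) * Real.cos (2*(V:ℝ)*α') := by
  have hVR : (V:ℝ) ≠ 0 := Nat.cast_ne_zero.mpr (by omega)
  have hterm : ∀ w ∈ Finset.range (2*V),
      Real.cos ((2*(V:ℝ)) * ((2*(w:ℝ)+1)*π/(2*(V:ℝ)) - α')) = -Real.cos (2*(V:ℝ)*α') := by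
    intro w _
    have h1 : (2*(V:ℝ)) * ((2*(w:ℝ)+1)*π/(2*(V:ℝ)) - α') = (π - 2*(V:ℝ)*α') + w * (2*π) := by
      field_simp
      ring
    rw [h1, Real.cos_add_nat_mul_two_pi, Real.cos_pi_sub]
  rw [Finset.sum_congr rfl hterm, Finset.sum_const, Finset.card_range]
  push_cast
  ring

lemma innerSum (V : ℕ) (hV : 1 ≤ V) (α' : ℝ) (v u : ℕ)
    (hv : v ∈ Finset.Icc 1 V) (hu : u ∈ Finset.Icc 1 V) :
    ∑ w ∈ Finset.range (2*V),
      Real.sin ((v:ℝ) * ((2*(w:ℝ)+1)*π/(2*(V:ℝ)) - α'))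
        * Real.sin ((u:ℝ) * ((2*(w:ℝ)+1)*π/(2*(V:ℝ)) - α'))
    = if v = u then (if v = V then (V:ℝ) + (V:ℝ) * Real.cos (2*(V:ℝ)*α') else (V:ℝ)) else 0 := by
  simp only [Finset.mem_Icc] at hv hu
  have hsplit : ∀ w ∈ Finset.range (2*V),
      Real.sin ((v:ℝ) * ((2*(w:ℝ)+1)*π/(2*(V:ℝ)) - α'))
        * Real.sin ((u:ℝ) * ((2*(w:ℝ)+1)*π/(2*(V:ℝ)) - α'))
      = (Real.cos ((((v:ℤ) - (u:ℤ) : ℤ):ℝ) * ((2*(w:ℝ)+1)*π/(2*(V:ℝ)) - α'))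
          - Real.cos ((((v:ℤ) + (u:ℤ) : ℤ):ℝ) * ((2*(w:ℝ)+1)*π/(2*(V:ℝ)) - α'))) / 2 := by
    intro w _
    set θ : ℝ := (2*(w:ℝ)+1)*π/(2*(V:ℝ)) - α'
    have h1 : (((v:ℤ) - (u:ℤ) : ℤ):ℝ) * θ = (v:ℝ)*θ - (u:ℝ)*θ := by push_cast; ring
    have h2 : (((v:ℤ) + (u:ℤ) : ℤ):ℝ) * θ = (v:ℝ)*θ + (u:ℝ)*θ := by push_cast; ring
    rw [h1, h2, Real.cos_sub, Real.cos_add]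
    ring
  rw [Finset.sum_congr rfl hsplit, ← Finset.sum_div, Finset.sum_sub_distrib]
  by_cases hvu : v = u
  · subst hvu
    rw [if_pos rfl]
    have hfst : ∑ w ∈ Finset.range (2*V),
        Real.cos ((((v:ℤ) - (v:ℤ) : ℤ):ℝ) * ((2*(w:ℝ)+1)*π/(2*(V:ℝ)) - α')) = 2*(V:ℝ) := by
      have h0 : ∀ w ∈ Finset.range (2*V),
          Real.cos ((((v:ℤ) - (v:ℤ) : ℤ):ℝ) * ((2*(w:ℝ)+1)*π/(2*(V:ℝ)) - α')) = 1 := by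
        intro w _; simp
      rw [Finset.sum_congr rfl h0, Finset.sum_const, Finset.card_range]
      push_cast; ring
    rw [hfst]
    by_cases hvV : v = V
    · subst hvV
      rw [if_pos rfl]
      have h2V : (((v:ℤ) + (v:ℤ) : ℤ):ℝ) = 2*(v:ℝ) := by push_cast; ring
      rw [h2V, sumCosTop v hV α']
      ring
    · rw [if_neg hvV]
      have hdvd : ¬ ((2 * (V:ℤ)) ∣ ((v:ℤ) + (v:ℤ))) := by
        rintro hd
        have habs2 : |((v:ℤ) + (v:ℤ))| < 2*(V:ℤ) := by
          rw [abs_of_pos (by omega)]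
          omega
        have := Int.eq_zero_of_abs_lt_dvd hd habs2
        omega
      rw [sumCosZero V hV α' ((v:ℤ) + (v:ℤ)) hdvd]
      ring
  · rw [if_neg hvu]
    have hd1 : ¬ ((2 * (V:ℤ)) ∣ ((v:ℤ) - (u:ℤ))) := by
      intro hd
      have habs2 : |((v:ℤ) - (u:ℤ))| < 2*(V:ℤ) := by
        rw [abs_lt]
        constructor <;> omega
      have := Int.eq_zero_of_abs_lt_dvd hd habs2
      omega
    have hd2 : ¬ ((2 * (V:ℤ)) ∣ ((v:ℤ) + (u:ℤ))) := by
      intro hd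
      have habs2 : |((v:ℤ) + (u:ℤ))| < 2*(V:ℤ) := by
        rw [abs_lt]
        constructor <;> omega
      have := Int.eq_zero_of_abs_lt_dvd hd habs2
      omega
    rw [sumCosZero V hV α' ((v:ℤ) - (u:ℤ)) hd1, sumCosZero V hV α' ((v:ℤ) + (u:ℤ)) hd2]
    ring

lemma sumSq (V : ℕ) : ∑ v ∈ Finset.Icc 1 V, (v:ℝ)^2 = (V:ℝ)*((V:ℝ)+1)*(2*(V:ℝ)+1)/6 := by
  induction V with
  | zero => simp
  | succ n ih =>
    rw [Finset.sum_Icc_succ_top (by omega), ih]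
    push_cast
    ring

theorem derivative_kernel_vector_norm_sq (V : ℕ) (hV : 1 ≤ V) (α' : ℝ)
    (κ : ℕ → ℝ)
    (hκ : ∀ w : ℕ, κ w =
      2 * ∑ v ∈ Finset.Icc 1 V,
        (v : ℝ) * Real.sin ((v : ℝ) * ((2 * (w : ℝ) + 1) * π / (2 * V) - α'))) :
    ∑ w ∈ Finset.range (2 * V), (κ w) ^ 2 =
      4 * V * ((V : ℝ) * (V + 1) * (2 * V + 1) / 6 + (V : ℝ) ^ 2 * Real.cos (2 * V * α')) := by
  have hVmem : V ∈ Finset.Icc 1 V := by simp [hV]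
  have hk2 : ∀ w : ℕ, κ w ^ 2 = ∑ v ∈ Finset.Icc 1 V, ∑ u ∈ Finset.Icc 1 V,
      (4 * ((v:ℝ) * (u:ℝ))) * (Real.sin ((v:ℝ) * ((2*(w:ℝ)+1)*π/(2*(V:ℝ)) - α'))
        * Real.sin ((u:ℝ) * ((2*(w:ℝ)+1)*π/(2*(V:ℝ)) - α'))) := by
    intro w
    rw [hκ w, mul_pow, sq, sq, Finset.sum_mul_sum]
    rw [Finset.mul_sum]
    refine Finset.sum_congr rfl fun v _ => ?_
    rw [Finset.mul_sum]
    refine Finset.sum_congr rfl fun u _ => ?_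
    ring
  calc ∑ w ∈ Finset.range (2 * V), (κ w) ^ 2
      = ∑ v ∈ Finset.Icc 1 V, ∑ u ∈ Finset.Icc 1 V, (4 * ((v:ℝ) * (u:ℝ))) *
          ∑ w ∈ Finset.range (2*V),
            (Real.sin ((v:ℝ) * ((2*(w:ℝ)+1)*π/(2*(V:ℝ)) - α'))
              * Real.sin ((u:ℝ) * ((2*(w:ℝ)+1)*π/(2*(V:ℝ)) - α'))) := by
        rw [Finset.sum_congr rfl fun w _ => hk2 w, Finset.sum_comm]
        refine Finset.sum_congr rfl fun v _ => ?_
        rw [Finset.sum_comm]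
        refine Finset.sum_congr rfl fun u _ => ?_
        rw [Finset.mul_sum]
    _ = ∑ v ∈ Finset.Icc 1 V, ∑ u ∈ Finset.Icc 1 V, (if v = u then
          (4 * ((v:ℝ) * (u:ℝ))) * (if v = V then (V:ℝ) + (V:ℝ) * Real.cos (2*(V:ℝ)*α') else (V:ℝ)) else 0) := by
        refine Finset.sum_congr rfl fun v hv => Finset.sum_congr rfl fun u hu => ?_
        rw [innerSum V hV α' v u hv hu]
        split <;> ring
    _ = ∑ v ∈ Finset.Icc 1 V,
          (4 * ((v:ℝ) * (v:ℝ))) * (if v = V then (V:ℝ) + (V:ℝ) * Real.cos (2*(V:ℝ)*α') else (V:ℝ)) := by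
        refine Finset.sum_congr rfl fun v hv => ?_
        rw [Finset.sum_ite_eq (Finset.Icc 1 V) v, if_pos hv]
    _ = ∑ v ∈ Finset.Icc 1 V,
          ((4*(V:ℝ)) * (v:ℝ)^2 + (if v = V then 4 * ((v:ℝ)^2 * ((V:ℝ) * Real.cos (2*(V:ℝ)*α'))) else 0)) := by
        refine Finset.sum_congr rfl fun v hv => ?_
        by_cases h : v = V
        · rw [if_pos h, if_pos h]; ring
        · rw [if_neg h, if_neg h]; ring
    _ = 4 * V * ((V : ℝ) * (V + 1) * (2 * V + 1) / 6 + (V : ℝ) ^ 2 * Real.cos (2 * V * α')) := by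
        rw [Finset.sum_add_distrib, ← Finset.mul_sum, sumSq V,
          Finset.sum_ite_eq' (Finset.Icc 1 V) V, if_pos hVmem]
        ring
end

section
/- For every natural number V ≥ 1 and real x such that sin(x/2) ≠ 0, the identity 2∑_{v=1}^{V} v·sin(v((2w+1)π/(2V) − α')) = (−1)^w·[cos(Vα')/(2 sin²((2w+1)π/(4V) − α'/2)) + V·sin((2w+1)π/(4V) − (V+1/2)α')/sin((2w+1)π/(4V) − α'/2)] holds for all integers w with 0 ≤ w ≤ 2V−1 and real α' with sin((2w+1)π/(4V) − α'/2) ≠ 0. -/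
open Real Finset

lemma aux_dirichlet_deriv (V : ℕ) (x : ℝ) (hs : Real.sin (x / 2) ≠ 0) :
    2 * ∑ v ∈ Finset.Icc 1 V, (v : ℝ) * Real.sin ((v : ℝ) * x) =
      (((V : ℝ) + 1) * Real.sin ((V : ℝ) * x) - (V : ℝ) * Real.sin (((V : ℝ) + 1) * x)) /
        (2 * Real.sin (x / 2) ^ 2) := by
  have h2 : Real.sin (x / 2) ^ 2 = (1 - Real.cos x) / 2 := by
    have h1 := Real.cos_two_mul (x / 2)
    rw [show 2 * (x / 2) = x by ring] at h1
    have h3 := Real.sin_sq_add_cos_sq (x / 2)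
    linarith
  have hne : (2 : ℝ) * Real.sin (x / 2) ^ 2 ≠ 0 := by positivity
  induction V with
  | zero => simp
  | succ n ih =>
    rw [Finset.sum_Icc_succ_top (by omega), mul_add, ih]
    push_cast
    have hA : Real.sin ((n : ℝ) * x) = Real.sin (((n : ℝ) + 1) * x) * Real.cos x
        - Real.cos (((n : ℝ) + 1) * x) * Real.sin x := by
      rw [show (n : ℝ) * x = ((n : ℝ) + 1) * x - x by ring, Real.sin_sub]
    have hB : Real.sin (((n : ℝ) + 1 + 1) * x) = Real.sin (((n : ℝ) + 1) * x) * Real.cos x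
        + Real.cos (((n : ℝ) + 1) * x) * Real.sin x := by
      rw [show ((n : ℝ) + 1 + 1) * x = ((n : ℝ) + 1) * x + x by ring, Real.sin_add]
    rw [div_add' _ _ _ hne, div_eq_div_iff hne hne]
    linear_combination (2 * Real.sin (x / 2) ^ 2) *
      (((n : ℝ) + 1) * hA - ((n : ℝ) + 1) * hB
        + (4 * (n : ℝ) + 4) * Real.sin (((n : ℝ) + 1) * x) * h2)
      + (4 * (n : ℝ) + 4) * Real.sin (x / 2) ^ 2 * hB

theorem derivative_dirichlet_at_shifted_points (V : ℕ) (hV : 1 ≤ V) (w : ℕ)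
    (hw : w ≤ 2 * V - 1) (α' : ℝ)
    (h : Real.sin ((2 * (w : ℝ) + 1) * π / (4 * V) - α' / 2) ≠ 0) :
    2 * ∑ v ∈ Finset.Icc 1 V,
        (v : ℝ) * Real.sin ((v : ℝ) * ((2 * (w : ℝ) + 1) * π / (2 * V) - α')) =
      (-1 : ℝ) ^ w *
        (Real.cos ((V : ℝ) * α') /
            (2 * (Real.sin ((2 * (w : ℝ) + 1) * π / (4 * V) - α' / 2)) ^ 2)
         + (V : ℝ) * Real.sin ((2 * (w : ℝ) + 1) * π / (4 * V) - ((V : ℝ) + 1/2) * α') /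
            Real.sin ((2 * (w : ℝ) + 1) * π / (4 * V) - α' / 2)) := by
  have hV0 : (V : ℝ) ≠ 0 := by positivity
  set x : ℝ := (2 * (w : ℝ) + 1) * π / (2 * V) - α' with hx
  set θ : ℝ := (2 * (w : ℝ) + 1) * π / (4 * V) - α' / 2 with hθ
  have hx2 : x / 2 = θ := by rw [hx, hθ]; field_simp; ring
  have hs : Real.sin (x / 2) ≠ 0 := by rw [hx2]; exact h
  rw [aux_dirichlet_deriv V x hs, hx2]
  have hVx : (V : ℝ) * x = (π / 2 - (V : ℝ) * α') + (w : ℕ) * π := by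
    rw [hx]; field_simp; ring
  have hA : Real.sin ((V : ℝ) * x) = (-1 : ℝ) ^ w * Real.cos ((V : ℝ) * α') := by
    rw [hVx, Real.sin_add_nat_mul_pi, Real.sin_pi_div_two_sub]
  have hV1x : ((V : ℝ) + 1) * x = (π / 2 + (2 * θ - (V : ℝ) * α')) + (w : ℕ) * π := by
    rw [hx, hθ]; field_simp; ring
  have hB : Real.sin (((V : ℝ) + 1) * x)
      = (-1 : ℝ) ^ w * Real.cos (2 * θ - (V : ℝ) * α') := by
    rw [hV1x, Real.sin_add_nat_mul_pi, Real.sin_add, Real.sin_pi_div_two, Real.cos_pi_div_two]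
    ring
  rw [hA, hB]
  have hψ : (2 * (w : ℝ) + 1) * π / (4 * V) - ((V : ℝ) + 1/2) * α' = θ - (V : ℝ) * α' := by
    rw [hθ]; ring
  rw [hψ]
  have hC : Real.cos (2 * θ - (V : ℝ) * α')
      = Real.cos θ * Real.cos (θ - (V : ℝ) * α') - Real.sin θ * Real.sin (θ - (V : ℝ) * α') := by
    rw [show 2 * θ - (V : ℝ) * α' = θ + (θ - (V : ℝ) * α') by ring, Real.cos_add]
  have hD : Real.cos ((V : ℝ) * α')
      = Real.cos θ * Real.cos (θ - (V : ℝ) * α') + Real.sin θ * Real.sin (θ - (V : ℝ) * α') := by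
    have h5 := Real.cos_sub θ (θ - (V : ℝ) * α')
    rw [show θ - (θ - (V : ℝ) * α') = (V : ℝ) * α' by ring] at h5
    linarith
  rw [hC, hD]
  field_simp
  ring
end

section
/- Gaussian process derivative prediction from two shifted observations (first-order Bayesian PSR, variance): Under the setup of the 2×2 kernel K = σ₀²·[[1, (γ²+2cos2α)/(γ²+2)], [(γ²+2cos2α)/(γ²+2), 1]], cross-covariance k' = (2σ₀² sinα/(γ²+2))·(−1, 1)ᵀ, and test-kernel value k'' = 2σ₀²/(γ²+2), the posterior variance k'' − k'ᵀ(K + σ²I)⁻¹ k' equals σ²/((γ²/2 + 1)σ²/σ₀² + 2 sin²α). -/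
open Real Matrix

theorem bayesian_psr_variance (γ σ₀ σ α : ℝ) (hγ : 0 < γ) (hσ₀ : 0 < σ₀) (hσ : 0 < σ)
    (K : Matrix (Fin 2) (Fin 2) ℝ)
    (hK : K = σ₀ ^ 2 • !![1, (γ ^ 2 + 2 * Real.cos (2 * α)) / (γ ^ 2 + 2);
                         (γ ^ 2 + 2 * Real.cos (2 * α)) / (γ ^ 2 + 2), 1])
    (k' : Fin 2 → ℝ)
    (hk' : k' = fun i => (2 * σ₀ ^ 2 * Real.sin α / (γ ^ 2 + 2)) * ![(-1 : ℝ), 1] i)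
    (k'' : ℝ) (hk'' : k'' = 2 * σ₀ ^ 2 / (γ ^ 2 + 2)) :
    k'' - k' ⬝ᵥ ((K + σ ^ 2 • (1 : Matrix (Fin 2) (Fin 2) ℝ))⁻¹ *ᵥ k') =
      σ ^ 2 / ((γ ^ 2 / 2 + 1) * σ ^ 2 / σ₀ ^ 2 + 2 * (Real.sin α) ^ 2) := by
  subst hK hk' hk''
  have hs2 : Real.sin α ^ 2 ≤ 1 := sin_sq_le_one α
  have hc : Real.cos (2 * α) = 1 - 2 * Real.sin α ^ 2 := by
    rw [Real.cos_two_mul, Real.cos_sq']; ring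
  set s := Real.sin α
  have hg2 : (0:ℝ) < γ ^ 2 + 2 := by positivity
  have hσ₀2 : (0:ℝ) < σ₀ ^ 2 := by positivity
  have hσ2 : (0:ℝ) < σ ^ 2 := by positivity
  set a : ℝ := σ₀ ^ 2 + σ ^ 2 with ha
  set b : ℝ := σ₀ ^ 2 * ((γ ^ 2 + 2 * Real.cos (2*α)) / (γ ^ 2 + 2)) with hb
  set t : ℝ := 2 * σ₀ ^ 2 * s / (γ ^ 2 + 2) with ht
  have hM : σ₀ ^ 2 • !![1, (γ ^ 2 + 2 * Real.cos (2 * α)) / (γ ^ 2 + 2);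
        (γ ^ 2 + 2 * Real.cos (2 * α)) / (γ ^ 2 + 2), 1]
      + σ ^ 2 • (1 : Matrix (Fin 2) (Fin 2) ℝ) = !![a, b; b, a] := by
    rw [Matrix.one_fin_two]
    ext i j
    fin_cases i <;> fin_cases j <;> simp [ha, hb]
  rw [hM]
  have hr1 : (γ ^ 2 + 2 * Real.cos (2*α)) / (γ ^ 2 + 2) ≤ 1 := by
    rw [div_le_one hg2, hc]; nlinarith [sq_nonneg s]
  have hr2 : -1 ≤ (γ ^ 2 + 2 * Real.cos (2*α)) / (γ ^ 2 + 2) := by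
    rw [le_div_iff₀ hg2, hc]; nlinarith [sq_nonneg γ]
  have hab : b < a := by
    rw [ha, hb]
    nlinarith [mul_le_mul_of_nonneg_left hr1 (le_of_lt hσ₀2)]
  have hab2 : -a < b := by
    rw [ha, hb]
    nlinarith [mul_le_mul_of_nonneg_left hr2 (le_of_lt hσ₀2)]
  have hD : (0:ℝ) < a - b := by linarith
  have hS : (0:ℝ) < a + b := by linarith
  have hdet0 : (0:ℝ) < a ^ 2 - b ^ 2 := by nlinarith
  have hdet : (!![a, b; b, a]).det = a ^ 2 - b ^ 2 := by
    simp [Matrix.det_fin_two_of]; ring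
  have hinv : (!![a, b; b, a])⁻¹ = (a ^ 2 - b ^ 2)⁻¹ • !![a, -b; -b, a] := by
    rw [Matrix.inv_def, hdet, Matrix.adjugate_fin_two_of, Ring.inverse_eq_inv']
  rw [hinv]
  have hquad : (fun i => t * ![(-1:ℝ), 1] i) ⬝ᵥ
      (((a ^ 2 - b ^ 2)⁻¹ • !![a, -b; -b, a]) *ᵥ (fun i => t * ![(-1:ℝ), 1] i))
      = 2 * t ^ 2 / (a - b) := by
    simp only [Matrix.smul_mulVec, Matrix.mulVec, dotProduct,
      Fin.sum_univ_two, Matrix.cons_val_zero, Matrix.cons_val_one, Matrix.head_cons,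
      Matrix.of_apply, Matrix.cons_val', Pi.smul_apply, Matrix.smul_apply, smul_eq_mul,
      Matrix.empty_val', Matrix.cons_val_fin_one]
    have h1 : a - b ≠ 0 := ne_of_gt hD
    have h2 : a ^ 2 - b ^ 2 ≠ 0 := ne_of_gt hdet0
    field_simp
    ring
  rw [hquad]
  have hDval : a - b = ((γ ^ 2 + 2) * σ ^ 2 + 4 * σ₀ ^ 2 * s ^ 2) / (γ ^ 2 + 2) := by
    rw [ha, hb, hc]; field_simp; ring
  have hE : (0:ℝ) < (γ ^ 2 + 2) * σ ^ 2 + 4 * σ₀ ^ 2 * s ^ 2 := by positivity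
  have hden : (0:ℝ) < (γ ^ 2 / 2 + 1) * σ ^ 2 / σ₀ ^ 2 + 2 * s ^ 2 := by positivity
  rw [hDval, ht]
  have h3 : (γ ^ 2 + 2 : ℝ) ≠ 0 := ne_of_gt hg2
  have h4 : ((γ ^ 2 + 2) * σ ^ 2 + 4 * σ₀ ^ 2 * s ^ 2 : ℝ) ≠ 0 := ne_of_gt hE
  have h5 : ((γ ^ 2 / 2 + 1) * σ ^ 2 / σ₀ ^ 2 + 2 * s ^ 2 : ℝ) ≠ 0 := ne_of_gt hden
  have h6 : (σ₀ : ℝ) ≠ 0 := ne_of_gt hσ₀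
  field_simp
  ring
end
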